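/- arXiv:2305.12589 — 3 statements merged into one kernel-verified Lean document; each statement's English description precedes it below -/
import Mathlib

section
/- Let m ≥ 1, 0 < σ < 1, 1 ≤ p < ∞ and δ > 0. Let I be a finite or countable index set, let Ω_i ⊂ ℝ^m for each i ∈ I, and set Ω = ⋃_{i∈I} Ω_i and Ω_{i,δ} = { x ∈ Ω : dist(x, Ω_i) < δ }. Then there is a constant C > 0 depending only on m, σ and p such that for every measurable u : Ω → ℝ, |u|_{W^{σ,p}(Ω)}^p ≤ Σ_{i∈I} |u|_{W^{σ,p}(Ω_{i,δ})}^p + C δ^{−σp} ‖u‖_{L^p(Ω)}^p. -/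
open MeasureTheory Set Metric
open scoped ENNReal
noncomputable section

/-- `ℝ^m` with the Euclidean norm. -/
abbrev Eucl (n : ℕ) : Type := EuclideanSpace ℝ (Fin n)

/-- The `p`-th power of the Gagliardo seminorm `|u|_{W^{σ,p}(A)}^p`. -/
noncomputable def gagliardoPow (m : ℕ) (σ p : ℝ) (A : Set (Eucl m)) (u : Eucl m → ℝ) : ℝ≥0∞ :=
  ∫⁻ x in A, ∫⁻ y in A, (‖u x - u y‖₊ : ℝ≥0∞) ^ p / (‖x - y‖₊ : ℝ≥0∞) ^ ((m : ℝ) + σ * p)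

lemma gagliardo_exp_identity (m k : ℕ) (s δ : ℝ) (hδ : 0 < δ) :
    ((2:ℝ)^k*δ)^(-((m:ℝ)+s)) * ((2:ℝ)^(k+1)*δ)^(m:ℕ) = 2^(m:ℝ) * ((2:ℝ)^(-s))^k * δ^(-s) := by
  have h2 : (0:ℝ) < 2 := two_pos
  have hp2 : (0:ℝ) ≤ (2:ℝ)^(k:ℕ) := by positivity
  have hp2' : (0:ℝ) ≤ (2:ℝ)^(k+1:ℕ) := by positivity
  rw [Real.mul_rpow hp2 hδ.le, ← Real.rpow_natCast ((2:ℝ)^(k+1)*δ) m,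
      Real.mul_rpow hp2' hδ.le, ← Real.rpow_natCast (2:ℝ) k, ← Real.rpow_natCast (2:ℝ) (k+1),
      ← Real.rpow_natCast ((2:ℝ)^(-s)) k,
      ← Real.rpow_mul h2.le, ← Real.rpow_mul h2.le, ← Real.rpow_mul h2.le,
      mul_mul_mul_comm, ← Real.rpow_add h2, ← Real.rpow_add hδ, ← Real.rpow_add h2]
  congr 1
  · congr 1; push_cast; ring
  · congr 1; ring

lemma gagliardo_tail_bound (m : ℕ) (s : ℝ) (hs : 0 < s) (δ : ℝ) (hδ : 0 < δ) :
    ∫⁻ z in (ball (0:Eucl m) δ)ᶜ, ((‖z‖₊:ℝ≥0∞)) ^ (-((m:ℝ) + s)) ≤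
      ENNReal.ofReal δ ^ (-s) *
        ((2:ℝ≥0∞)^(m:ℝ) * volume (ball (0:Eucl m) 1) *
          (1 - ENNReal.ofReal ((2:ℝ)^(-s)))⁻¹) := by
  set V := volume (ball (0:Eucl m) 1) with hV
  set A : ℕ → Set (Eucl m) := fun k => closedBall (0:Eucl m) ((2:ℝ)^(k+1)*δ) \ ball 0 ((2:ℝ)^k*δ)
    with hA
  have hcov : (ball (0:Eucl m) δ)ᶜ ⊆ ⋃ k, A k := by
    intro z hz
    have hz' : δ ≤ ‖z‖ := by
      simpa [mem_ball_zero_iff, not_lt] using hz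
    have ht1 : (1:ℝ) ≤ ‖z‖/δ := (one_le_div hδ).2 hz'
    have hex : ∃ n : ℕ, ‖z‖/δ < 2^(n+1) := by
      obtain ⟨n, hn⟩ := pow_unbounded_of_one_lt (‖z‖/δ) (by norm_num : (1:ℝ) < 2)
      exact ⟨n, lt_of_lt_of_le hn (pow_le_pow_right₀ one_le_two (Nat.le_succ n))⟩
    set n := Nat.find hex with hn
    have h1 : ‖z‖/δ < 2^(n+1) := Nat.find_spec hex
    have h2 : (2:ℝ)^n ≤ ‖z‖/δ := by
      rcases Nat.eq_zero_or_pos n with h | h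
      · simpa [h] using ht1
      · have h3 := Nat.find_min hex (show n-1 < n from Nat.sub_lt h one_pos)
        rw [not_lt] at h3
        have h4 : n - 1 + 1 = n := Nat.succ_pred_eq_of_pos h
        rwa [h4] at h3
    refine mem_iUnion.2 ⟨n, ?_, ?_⟩
    · rw [mem_closedBall_zero_iff]
      have := (div_lt_iff₀ hδ).1 h1
      linarith
    · rw [mem_ball_zero_iff, not_lt]
      exact (le_div_iff₀ hδ).1 h2
  have hmcast : (0:ℝ) ≤ (m:ℝ) + s := by positivity
  calc ∫⁻ z in (ball (0:Eucl m) δ)ᶜ, ((‖z‖₊:ℝ≥0∞)) ^ (-((m:ℝ) + s))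
      ≤ ∫⁻ z in ⋃ k, A k, ((‖z‖₊:ℝ≥0∞)) ^ (-((m:ℝ) + s)) :=
        lintegral_mono' (Measure.restrict_mono hcov le_rfl) le_rfl
    _ ≤ ∑' k, ∫⁻ z in A k, ((‖z‖₊:ℝ≥0∞)) ^ (-((m:ℝ) + s)) := lintegral_iUnion_le _ _
    _ ≤ ∑' k, ENNReal.ofReal (((2:ℝ)^k*δ)^(-((m:ℝ)+s)) * ((2:ℝ)^(k+1)*δ)^(m:ℕ)) * V := by
        refine ENNReal.tsum_le_tsum fun k => ?_
        have hmeas : MeasurableSet (A k) := measurableSet_closedBall.diff measurableSet_ball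
        have hpos : (0:ℝ) < (2:ℝ)^k*δ := by positivity
        have step1 : ∫⁻ z in A k, ((‖z‖₊:ℝ≥0∞)) ^ (-((m:ℝ) + s)) ≤
            ∫⁻ _ in A k, ENNReal.ofReal (((2:ℝ)^k*δ)^(-((m:ℝ)+s))) := by
          refine setLIntegral_mono' hmeas fun z hz => ?_
          have hz1 : (2:ℝ)^k*δ ≤ ‖z‖ := by
            have := hz.2
            rwa [mem_ball_zero_iff, not_lt] at this
          have hle : ENNReal.ofReal ((2:ℝ)^k*δ) ≤ (‖z‖₊:ℝ≥0∞) := by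
            rw [← enorm_eq_nnnorm, ← ofReal_norm]
            exact ENNReal.ofReal_le_ofReal hz1
          rw [← ENNReal.ofReal_rpow_of_pos hpos, ENNReal.rpow_neg, ENNReal.rpow_neg]
          exact ENNReal.inv_le_inv.2 (ENNReal.rpow_le_rpow hle hmcast)
        refine step1.trans ?_
        rw [setLIntegral_const]
        have hvol : volume (A k) ≤ ENNReal.ofReal (((2:ℝ)^(k+1)*δ)^(m:ℕ)) * V := by
          refine (measure_mono diff_subset).trans ?_
          rw [Measure.addHaar_closedBall _ _ (by positivity : (0:ℝ) ≤ (2:ℝ)^(k+1)*δ)]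
          simp [hV]
        calc ENNReal.ofReal (((2:ℝ)^k*δ)^(-((m:ℝ)+s))) * volume (A k)
            ≤ ENNReal.ofReal (((2:ℝ)^k*δ)^(-((m:ℝ)+s))) *
                (ENNReal.ofReal (((2:ℝ)^(k+1)*δ)^(m:ℕ)) * V) := mul_le_mul_right hvol _
          _ = ENNReal.ofReal (((2:ℝ)^k*δ)^(-((m:ℝ)+s)) * ((2:ℝ)^(k+1)*δ)^(m:ℕ)) * V := by
              rw [ENNReal.ofReal_mul (by positivity), mul_assoc]
    _ = ENNReal.ofReal δ ^ (-s) * ((2:ℝ≥0∞)^(m:ℝ) * V * (1 - ENNReal.ofReal ((2:ℝ)^(-s)))⁻¹) := by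
        have hkey : ∀ k : ℕ,
            ENNReal.ofReal (((2:ℝ)^k*δ)^(-((m:ℝ)+s)) * ((2:ℝ)^(k+1)*δ)^(m:ℕ)) * V
            = (ENNReal.ofReal δ ^ (-s) * ((2:ℝ≥0∞)^(m:ℝ) * V)) *
                ENNReal.ofReal ((2:ℝ)^(-s)) ^ k := by
          intro k
          rw [gagliardo_exp_identity m k s δ hδ]
          rw [ENNReal.ofReal_mul (by positivity), ENNReal.ofReal_mul (by positivity),
            ENNReal.ofReal_pow (by positivity), ENNReal.ofReal_rpow_of_pos hδ,
            ← ENNReal.ofReal_rpow_of_pos two_pos]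
          have : ENNReal.ofReal 2 = (2:ℝ≥0∞) := by norm_num
          rw [this]
          ring
        simp_rw [hkey]
        rw [ENNReal.tsum_mul_left, ENNReal.tsum_geometric]
        ring

lemma gagliardo_add_rpow_le (a b : ℝ≥0∞) (p : ℝ) (hp : 0 ≤ p) :
    (a + b) ^ p ≤ (2:ℝ≥0∞) ^ p * (a ^ p + b ^ p) := by
  calc (a + b) ^ p ≤ ((2:ℝ≥0∞) * max a b) ^ p := by
        refine ENNReal.rpow_le_rpow ?_ hp
        rw [two_mul]
        exact add_le_add (le_max_left a b) (le_max_right a b)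
    _ = (2:ℝ≥0∞) ^ p * (max a b) ^ p := ENNReal.mul_rpow_of_nonneg _ _ hp
    _ ≤ (2:ℝ≥0∞) ^ p * (a ^ p + b ^ p) := by
        refine mul_le_mul_right ?_ _
        rcases max_cases a b with ⟨h, _⟩ | ⟨h, _⟩ <;> rw [h]
        · exact le_add_of_nonneg_right zero_le
        · exact le_add_of_nonneg_left zero_le

/-- **Countable almost-additivity of the Gagliardo seminorm.**
Let `m ≥ 1`, `0 < σ < 1`, `1 ≤ p < ∞`. There is a constant `C > 0`, depending only on `m`,
`σ` and `p`, such that for every `δ > 0`, every finite or countable family `(Ω_i)_{i ∈ ι}` of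
subsets of `ℝ^m` with union `Ω`, and every measurable `u : Ω → ℝ`,
`|u|_{W^{σ,p}(Ω)}^p ≤ ∑_i |u|_{W^{σ,p}(Ω_{i,δ})}^p + C δ^{-σp} ‖u‖_{L^p(Ω)}^p`
where `Ω_{i,δ} = {x ∈ Ω : dist(x, Ω_i) < δ}`. -/
theorem gagliardo_countable_almost_additivity
    (m : ℕ) (hm : 1 ≤ m) (σ p : ℝ) (hσ0 : 0 < σ) (hσ1 : σ < 1) (hp : 1 ≤ p) :
    ∃ C : ℝ, 0 < C ∧ ∀ (δ : ℝ), 0 < δ →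
      ∀ (ι : Type) (_ : Countable ι) (Ωi : ι → Set (Eucl m)) (u : Eucl m → ℝ),
        Measurable u →
        gagliardoPow m σ p (⋃ i, Ωi i) u ≤
          (∑' i : ι, gagliardoPow m σ p
              {x : Eucl m | x ∈ (⋃ j, Ωi j) ∧ Metric.infDist x (Ωi i) < δ} u)
            + ENNReal.ofReal C * ENNReal.ofReal δ ^ (-(σ * p)) *
                ∫⁻ x in (⋃ i, Ωi i), (‖u x‖₊ : ℝ≥0∞) ^ p := by
  classical
  have hp0 : 0 < p := lt_of_lt_of_le one_pos hp
  set s : ℝ := σ * p with hs_def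
  have hs : 0 < s := mul_pos hσ0 hp0
  set V : ℝ≥0∞ := volume (ball (0:Eucl m) 1) with hV
  set K₀ : ℝ≥0∞ := (2:ℝ≥0∞)^(m:ℝ) * V * (1 - ENNReal.ofReal ((2:ℝ)^(-s)))⁻¹ with hK₀
  have hx1 : ENNReal.ofReal ((2:ℝ)^(-s)) < 1 := by
    rw [← ENNReal.ofReal_one]
    exact ENNReal.ofReal_lt_ofReal_iff_of_nonneg (by positivity) |>.2
      (Real.rpow_lt_one_of_one_lt_of_neg one_lt_two (neg_neg_iff_pos.2 hs))
  have hK₀top : K₀ ≠ ⊤ := by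
    rw [hK₀]
    refine ENNReal.mul_ne_top (ENNReal.mul_ne_top ?_ measure_ball_lt_top.ne) ?_
    · exact (ENNReal.rpow_lt_top_of_nonneg (Nat.cast_nonneg m) (by norm_num)).ne
    · rw [ENNReal.inv_ne_top]
      intro h
      exact absurd (tsub_eq_zero_iff_le.1 h) (not_le.2 hx1)
  refine ⟨(2:ℝ)^(p+1) * K₀.toReal + 1, by positivity, ?_⟩
  intro δ hδ ι hι Ωi u hu
  set Ω : Set (Eucl m) := ⋃ i, Ωi i with hΩ
  set ν : Measure (Eucl m) := volume.restrict Ω with hν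
  set f : Eucl m → Eucl m → ℝ≥0∞ :=
    fun x y => (‖u x - u y‖₊ : ℝ≥0∞) ^ p / (‖x - y‖₊ : ℝ≥0∞) ^ ((m : ℝ) + s) with hf
  set a : Eucl m → ℝ≥0∞ := fun t => (‖u t‖₊ : ℝ≥0∞) ^ p with ha
  set k : Eucl m → ℝ≥0∞ :=
    ((ball (0:Eucl m) δ)ᶜ).indicator (fun z => (‖z‖₊ : ℝ≥0∞) ^ (-((m:ℝ) + s))) with hk
  set L : ℝ≥0∞ := ∫⁻ x, a x ∂ν with hL
  set U : ι → Set (Eucl m) := fun i => {x | infDist x (Ωi i) < δ} with hUdef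
  set T : ι → Set (Eucl m) := fun i => {x | x ∈ Ω ∧ infDist x (Ωi i) < δ} with hTdef
  have hUopen : ∀ i, IsOpen (U i) := fun i =>
    isOpen_lt (continuous_infDist_pt _) continuous_const
  have hTUi : ∀ i, T i = U i ∩ Ω := fun i => by
    ext x; simp [hTdef, hUdef, and_comm]
  -- measurability
  have hfm : Measurable (Function.uncurry f) := by
    apply Measurable.div
    · exact ENNReal.continuous_rpow_const.measurable.comp
        ((hu.comp measurable_fst).sub (hu.comp measurable_snd)).nnnorm.coe_nnreal_ennreal
    · exact ENNReal.continuous_rpow_const.measurable.comp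
        (measurable_fst.sub measurable_snd).nnnorm.coe_nnreal_ennreal
  have ham : Measurable a :=
    ENNReal.continuous_rpow_const.measurable.comp hu.nnnorm.coe_nnreal_ennreal
  have hkm : Measurable k :=
    (ENNReal.continuous_rpow_const.measurable.comp
      measurable_nnnorm.coe_nnreal_ennreal).indicator measurableSet_ball.compl
  have h2top : ((2:ℝ≥0∞) ^ p) ≠ ⊤ :=
    (ENNReal.rpow_lt_top_of_nonneg hp0.le (by norm_num)).ne
  set Kd : ℝ≥0∞ := ∫⁻ z, k z with hKd
  have hKδ : Kd ≤ ENNReal.ofReal δ ^ (-s) * K₀ := by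
    rw [hKd, hk, lintegral_indicator measurableSet_ball.compl _]
    exact gagliardo_tail_bound m s hs δ hδ
  have hkx : ∀ x : Eucl m, ∫⁻ y, k (x - y) = Kd := fun x =>
    (Measure.measurePreserving_sub_left volume x).lintegral_comp hkm
  have hky : ∀ y : Eucl m, ∫⁻ x, k (x - y) = Kd := fun y =>
    lintegral_sub_right_eq_self k y
  -- off-diagonal pointwise bound
  have hfk : ∀ x y : Eucl m, y ∉ ball x δ →
      f x y ≤ (2:ℝ≥0∞) ^ p * (a x + a y) * k (x - y) := by
    intro x y hy
    have hd : δ ≤ dist y x := by rwa [mem_ball, not_lt] at hy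
    have hxy : x - y ∈ (ball (0:Eucl m) δ)ᶜ := by
      rw [mem_compl_iff, mem_ball_zero_iff, not_lt, ← dist_eq_norm, dist_comm]
      exact hd
    rw [hk, indicator_of_mem hxy]
    show (‖u x - u y‖₊ : ℝ≥0∞) ^ p / (‖x - y‖₊ : ℝ≥0∞) ^ ((m : ℝ) + s) ≤ _
    rw [div_eq_mul_inv, ← ENNReal.rpow_neg]
    refine mul_le_mul_left ?_ _
    calc (‖u x - u y‖₊ : ℝ≥0∞) ^ p ≤ ((‖u x‖₊ : ℝ≥0∞) + (‖u y‖₊ : ℝ≥0∞)) ^ p := by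
          refine ENNReal.rpow_le_rpow ?_ hp0.le
          rw [← ENNReal.coe_add]
          exact_mod_cast nnnorm_sub_le (u x) (u y)
      _ ≤ (2:ℝ≥0∞) ^ p * ((‖u x‖₊ : ℝ≥0∞) ^ p + (‖u y‖₊ : ℝ≥0∞) ^ p) :=
          gagliardo_add_rpow_le _ _ p hp0.le
  -- Bound 1 : near-diagonal part
  have hFim : ∀ i, Measurable fun x => ∫⁻ y in T i, f x y :=
    fun i => Measurable.lintegral_prod_right hfm
  have bound1 : (∫⁻ x, ∫⁻ y in ball x δ, f x y ∂ν ∂ν) ≤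
      ∑' i, ∫⁻ x in T i, ∫⁻ y in T i, f x y := by
    have hptwise : ∀ x, ∫⁻ y in ball x δ, f x y ∂ν ≤
        ∑' i, (U i).indicator (fun x' => ∫⁻ y in T i, f x' y) x := by
      intro x
      rw [hν, Measure.restrict_restrict measurableSet_ball, hΩ, inter_iUnion]
      refine (lintegral_iUnion_le _ _).trans (ENNReal.tsum_le_tsum fun i => ?_)
      by_cases hx : x ∈ U i
      · rw [indicator_of_mem hx]
        refine lintegral_mono' (Measure.restrict_mono ?_ le_rfl) le_rfl
        rintro y ⟨hy1, hy2⟩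
        exact ⟨mem_iUnion.2 ⟨i, hy2⟩, by rw [infDist_zero_of_mem hy2]; exact hδ⟩
      · rw [indicator_of_notMem hx]
        have hempty : ball x δ ∩ Ωi i = ∅ := by
          ext y
          simp only [mem_inter_iff, mem_empty_iff_false, iff_false, not_and]
          intro hy1 hy2
          exact hx (lt_of_le_of_lt (infDist_le_dist_of_mem hy2)
            (by rw [dist_comm]; exact mem_ball.1 hy1))
        simp [hempty]
    calc (∫⁻ x, ∫⁻ y in ball x δ, f x y ∂ν ∂ν)
        ≤ ∫⁻ x, ∑' i, (U i).indicator (fun x' => ∫⁻ y in T i, f x' y) x ∂ν :=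
          lintegral_mono hptwise
      _ = ∑' i, ∫⁻ x, (U i).indicator (fun x' => ∫⁻ y in T i, f x' y) x ∂ν :=
          lintegral_tsum fun i => ((hFim i).indicator (hUopen i).measurableSet).aemeasurable
      _ = ∑' i, ∫⁻ x in T i, ∫⁻ y in T i, f x y := by
          refine tsum_congr fun i => ?_
          rw [lintegral_indicator (hUopen i).measurableSet _, hν,
            Measure.restrict_restrict (hUopen i).measurableSet, ← hTUi i]
  -- Bound 2 : off-diagonal part
  have bound2 : (∫⁻ x, ∫⁻ y in (ball x δ)ᶜ, f x y ∂ν ∂ν) ≤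
      (2:ℝ≥0∞) ^ p * (Kd * L + Kd * L) := by
    have step1 : ∀ x, ∫⁻ y in (ball x δ)ᶜ, f x y ∂ν ≤
        (2:ℝ≥0∞) ^ p * (a x * Kd + ∫⁻ y, a y * k (x - y) ∂ν) := by
      intro x
      have hmy : Measurable fun y => k (x - y) :=
        hkm.comp (measurable_const.sub measurable_id)
      calc ∫⁻ y in (ball x δ)ᶜ, f x y ∂ν
          ≤ ∫⁻ y in (ball x δ)ᶜ, (2:ℝ≥0∞) ^ p * (a x + a y) * k (x - y) ∂ν :=
            setLIntegral_mono' measurableSet_ball.compl fun y hy => hfk x y hy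
        _ ≤ ∫⁻ y, (2:ℝ≥0∞) ^ p * (a x + a y) * k (x - y) ∂ν :=
            lintegral_mono' Measure.restrict_le_self le_rfl
        _ = (2:ℝ≥0∞) ^ p * ∫⁻ y, (a x + a y) * k (x - y) ∂ν := by
            simp_rw [mul_assoc]
            exact lintegral_const_mul' _ _ h2top
        _ = (2:ℝ≥0∞) ^ p * ∫⁻ y, (a x * k (x - y) + a y * k (x - y)) ∂ν := by
            simp_rw [add_mul]
        _ = (2:ℝ≥0∞) ^ p *
              ((∫⁻ y, a x * k (x - y) ∂ν) + ∫⁻ y, a y * k (x - y) ∂ν) := by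
            rw [lintegral_add_left (hmy.const_mul _)]
        _ ≤ (2:ℝ≥0∞) ^ p * (a x * Kd + ∫⁻ y, a y * k (x - y) ∂ν) := by
            refine mul_le_mul_right (add_le_add_left ?_ _) _
            rw [lintegral_const_mul _ hmy]
            refine mul_le_mul_right ?_ _
            exact (lintegral_mono' Measure.restrict_le_self le_rfl).trans (hkx x).le
    calc (∫⁻ x, ∫⁻ y in (ball x δ)ᶜ, f x y ∂ν ∂ν)
        ≤ ∫⁻ x, (2:ℝ≥0∞) ^ p * (a x * Kd + ∫⁻ y, a y * k (x - y) ∂ν) ∂ν :=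
          lintegral_mono step1
      _ = (2:ℝ≥0∞) ^ p * ∫⁻ x, (a x * Kd + ∫⁻ y, a y * k (x - y) ∂ν) ∂ν :=
          lintegral_const_mul' _ _ h2top
      _ = (2:ℝ≥0∞) ^ p *
            ((∫⁻ x, a x * Kd ∂ν) + ∫⁻ x, ∫⁻ y, a y * k (x - y) ∂ν ∂ν) := by
          rw [lintegral_add_left (ham.mul_const _)]
      _ ≤ (2:ℝ≥0∞) ^ p * (Kd * L + Kd * L) := by
          refine mul_le_mul_right (add_le_add ?_ ?_) _
          · rw [lintegral_mul_const _ ham, mul_comm]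
          · have hswap : (∫⁻ x, ∫⁻ y, a y * k (x - y) ∂ν ∂ν) =
                ∫⁻ y, ∫⁻ x, a y * k (x - y) ∂ν ∂ν :=
              lintegral_lintegral_swap
                (((ham.comp measurable_snd).mul
                  (hkm.comp (measurable_fst.sub measurable_snd))).aemeasurable)
            rw [hswap]
            calc (∫⁻ y, ∫⁻ x, a y * k (x - y) ∂ν ∂ν)
                ≤ ∫⁻ y, a y * Kd ∂ν := by
                  refine lintegral_mono fun y => ?_
                  have hmx : Measurable fun x : Eucl m => k (x - y) :=
                    hkm.comp (measurable_id.sub measurable_const)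
                  rw [lintegral_const_mul _ hmx]
                  refine mul_le_mul_right ?_ _
                  exact (lintegral_mono' Measure.restrict_le_self le_rfl).trans (hky y).le
              _ = Kd * L := by rw [lintegral_mul_const _ ham, mul_comm]
  -- measurability of near-diagonal inner integral
  have hSmeas : MeasurableSet {q : Eucl m × Eucl m | q.2 ∈ ball q.1 δ} := by
    have : Continuous fun q : Eucl m × Eucl m => dist q.2 q.1 :=
      continuous_snd.dist continuous_fst
    exact measurableSet_lt this.measurable measurable_const
  have hg1meas : Measurable fun x => ∫⁻ y in ball x δ, f x y ∂ν := by
    have heq : ∀ x, ∫⁻ y in ball x δ, f x y ∂ν =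
        ∫⁻ y, ({q : Eucl m × Eucl m | q.2 ∈ ball q.1 δ}).indicator
          (Function.uncurry f) (x, y) ∂ν := by
      intro x
      rw [← lintegral_indicator measurableSet_ball _]
      refine lintegral_congr fun y => ?_
      by_cases hy : dist y x < δ <;>
        simp [Set.indicator_apply, Function.uncurry, mem_ball, hy]
    simp_rw [heq]
    exact Measurable.lintegral_prod_right
      ((hfm.indicator hSmeas).comp (measurable_id))
  -- putting things together
  have main : gagliardoPow m σ p Ω u ≤
      (∑' i, ∫⁻ x in T i, ∫⁻ y in T i, f x y) + (2:ℝ≥0∞) ^ p * (Kd * L + Kd * L) := by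
    have hsplit : gagliardoPow m σ p Ω u =
        ∫⁻ x, (∫⁻ y in ball x δ, f x y ∂ν + ∫⁻ y in (ball x δ)ᶜ, f x y ∂ν) ∂ν := by
      refine lintegral_congr fun x => ?_
      exact (lintegral_add_compl (f x) measurableSet_ball).symm
    rw [hsplit, lintegral_add_left hg1meas]
    exact add_le_add bound1 bound2
  refine main.trans (add_le_add ?_ ?_)
  · exact le_of_eq (tsum_congr fun i => rfl)
  · calc (2:ℝ≥0∞) ^ p * (Kd * L + Kd * L)
        ≤ (2:ℝ≥0∞) ^ p * ((ENNReal.ofReal δ ^ (-s) * K₀) * L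
            + (ENNReal.ofReal δ ^ (-s) * K₀) * L) := by
          gcongr
      _ = ((2:ℝ≥0∞) ^ (p+1) * K₀) * ENNReal.ofReal δ ^ (-s) * L := by
          rw [ENNReal.rpow_add p 1 two_ne_zero ENNReal.ofNat_ne_top, ENNReal.rpow_one]
          ring
      _ ≤ ENNReal.ofReal ((2:ℝ)^(p+1) * K₀.toReal + 1) * ENNReal.ofReal δ ^ (-s) * L := by
          refine mul_le_mul_left (mul_le_mul_left ?_ _) _
          calc (2:ℝ≥0∞) ^ (p+1) * K₀
              = ENNReal.ofReal ((2:ℝ)^(p+1)) * ENNReal.ofReal K₀.toReal := by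
                have h2 : ENNReal.ofReal ((2:ℝ)^(p+1)) = (2:ℝ≥0∞)^(p+1) := by
                  rw [← ENNReal.ofReal_rpow_of_pos two_pos]
                  norm_num
                rw [h2, ENNReal.ofReal_toReal hK₀top]
            _ = ENNReal.ofReal ((2:ℝ)^(p+1) * K₀.toReal) :=
                (ENNReal.ofReal_mul (by positivity)).symm
            _ ≤ ENNReal.ofReal ((2:ℝ)^(p+1) * K₀.toReal + 1) :=
                ENNReal.ofReal_le_ofReal (by linarith)
end
end

section
/- Let 1 ≤ p < ∞, let (X, 𝒳, μ) be a measure space, let u : X → ℝ be a measurable map that does not vanish μ-almost everywhere, and let (u_n)_{n∈ℕ} be a sequence in L^p(X, μ) converging to u in L^p(X, μ). Then there exist a μ-summable function w : X → [0, +∞] with ∫_X w dμ > 0 and a subsequence (u_{n_i})_{i∈ℕ} such that for every measure space (Y, 𝒴, λ) and every measurable map γ : Y → X with w ∘ γ ∈ L^1(Y, λ), one has: u_{n_i} ∘ γ ∈ L^p(Y, λ) for every i, u_{n_i} ∘ γ → u ∘ γ in L^p(Y, λ) as i → ∞, and ∫_Y |u ∘ γ|^p dλ ≤ 2 (∫_Y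 w ∘ γ dλ / ∫_X w dμ) ∫_X |u|^p dμ. -/
open MeasureTheory
open scoped ENNReal
noncomputable section

private lemma lint_eq_eLpNorm_rpow (p : ℝ) (hp0 : 0 < p) {α : Type*} [MeasurableSpace α]
    (ν : Measure α) (f : α → ℝ) :
    (∫⁻ x, (‖f x‖₊ : ℝ≥0∞) ^ p ∂ν) = (eLpNorm f (ENNReal.ofReal p) ν) ^ p := by
  have hq0 : (ENNReal.ofReal p) ≠ 0 := by
    simp only [ne_eq, ENNReal.ofReal_eq_zero, not_le]; linarith
  rw [eLpNorm_eq_lintegral_rpow_enorm_toReal hq0 ENNReal.ofReal_ne_top,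
    ENNReal.toReal_ofReal hp0.le, ← ENNReal.rpow_mul, one_div,
    inv_mul_cancel₀ hp0.ne', ENNReal.rpow_one]
  rfl

private lemma lt_top_of_rpow_lt_top {x : ℝ≥0∞} {p : ℝ} (hp : 0 < p) (h : x ^ p < ⊤) :
    x < ⊤ := by
  by_contra hx
  rw [not_lt, top_le_iff] at hx
  subst hx
  rw [ENNReal.top_rpow_of_pos hp] at h
  exact (lt_irrefl _ h)

private lemma two_pow_mul_inv_two_pow (i : ℕ) :
    (2 : ℝ≥0∞) ^ i * (2⁻¹ : ℝ≥0∞) ^ i = 1 := by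
  rw [← mul_pow, ENNReal.mul_inv_cancel two_ne_zero (by norm_num), one_pow]

/-- **Fuglede-type detector for `L^p` convergence.**
Let `1 ≤ p < ∞`, let `(X, μ)` be a measure space, let `u : X → ℝ` be measurable and not
`μ`-a.e. zero, and let `(u_n)` be a sequence in `L^p(X, μ)` converging to `u` in `L^p(X, μ)`.
Then there exist a summable `w : X → [0, +∞]` with `∫_X w dμ > 0` and a subsequence
`(u_{n_i})` such that for every measure space `(Y, λ)` and every measurable `γ : Y → X` with
`w ∘ γ ∈ L^1(Y, λ)`: each `u_{n_i} ∘ γ ∈ L^p(Y, λ)`, `u_{n_i} ∘ γ → u ∘ γ` in `L^p(Y, λ)`,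
and `∫_Y |u ∘ γ|^p dλ ≤ 2 (∫_Y w ∘ γ dλ / ∫_X w dμ) ∫_X |u|^p dμ`. -/
theorem fuglede_detector_Lp
    (p : ℝ) (hp : 1 ≤ p)
    (X : Type) [MeasurableSpace X] (μ : Measure X)
    (u : X → ℝ) (hu : Measurable u) (hu0 : ¬ (u =ᵐ[μ] 0))
    (un : ℕ → X → ℝ) (hunm : ∀ n, Measurable (un n))
    (hun : ∀ n, MemLp (un n) (ENNReal.ofReal p) μ)
    (hconv : Filter.Tendsto (fun n => eLpNorm (un n - u) (ENNReal.ofReal p) μ)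
      Filter.atTop (nhds 0)) :
    ∃ (w : X → ℝ≥0∞) (ni : ℕ → ℕ), Measurable w ∧ (∫⁻ x, w x ∂μ) < ⊤ ∧
      0 < (∫⁻ x, w x ∂μ) ∧ StrictMono ni ∧
      ∀ (Y : Type) [MeasurableSpace Y], ∀ (lam : Measure Y) (γ : Y → X), Measurable γ →
        (∫⁻ y, w (γ y) ∂lam) < ⊤ →
        (∀ i, MemLp (fun y => un (ni i) (γ y)) (ENNReal.ofReal p) lam) ∧
        Filter.Tendsto
          (fun i => eLpNorm (fun y => un (ni i) (γ y) - u (γ y)) (ENNReal.ofReal p) lam)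
          Filter.atTop (nhds 0) ∧
        (∫⁻ y, (‖u (γ y)‖₊ : ℝ≥0∞) ^ p ∂lam) ≤
          2 * ((∫⁻ y, w (γ y) ∂lam) / (∫⁻ x, w x ∂μ)) *
            ∫⁻ x, (‖u x‖₊ : ℝ≥0∞) ^ p ∂μ := by
  have hp0 : (0:ℝ) < p := lt_of_lt_of_le one_pos hp
  set q := ENNReal.ofReal p with hqdef
  -- u is in L^p
  have huLp : MemLp u q μ := by
    obtain ⟨N0, hN0⟩ := (hconv.eventually (gt_mem_nhds (zero_lt_one' ℝ≥0∞))).exists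
    have hd : MemLp (un N0 - u) q μ :=
      ⟨((hunm N0).sub hu).aestronglyMeasurable, hN0.trans_le le_top⟩
    have := (hun N0).sub hd
    rwa [sub_sub_cancel] at this
  -- the integral of |u|^p
  set ε := ∫⁻ x, (‖u x‖₊ : ℝ≥0∞) ^ p ∂μ with hεdef
  have hεt : ε < ⊤ := by
    rw [hεdef, lint_eq_eLpNorm_rpow p hp0]
    exact ENNReal.rpow_lt_top_of_nonneg hp0.le huLp.2.ne
  have hε0 : 0 < ε := by
    rw [pos_iff_ne_zero]
    intro h
    apply hu0
    have hm : Measurable fun x => (‖u x‖₊ : ℝ≥0∞) ^ p := hu.enorm.pow_const p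
    have := (lintegral_eq_zero_iff hm).1 h
    filter_upwards [this] with x hx
    simp only [Pi.zero_apply, ENNReal.rpow_eq_zero_iff] at hx ⊢
    rcases hx with ⟨h1, _⟩ | ⟨h1, h2⟩
    · simpa using h1
    · exact absurd h1 (by simp)
  set εm := min ε 1 with hεmdef
  have hεm0 : εm ≠ 0 := (lt_min hε0 zero_lt_one).ne'
  have hεmt : εm ≠ ⊤ := (min_le_right _ _).trans_lt (by norm_num) |>.ne
  have hεmε : εm ≤ ε := min_le_left _ _
  -- choose the subsequence
  have hP : ∀ i : ℕ, ∀ᶠ n in Filter.atTop,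
      (∫⁻ x, (‖un n x - u x‖₊ : ℝ≥0∞) ^ p ∂μ) ≤ (2⁻¹ : ℝ≥0∞) ^ (2*i+1) * εm := by
    intro i
    set b : ℝ≥0∞ := (2⁻¹ : ℝ≥0∞) ^ (2*i+1) * εm with hbdef
    have hb0 : 0 < b := by
      rw [hbdef]
      exact ENNReal.mul_pos (pow_ne_zero _ (by norm_num)) hεm0
    have hbt : b ≠ ⊤ := ENNReal.mul_ne_top (ENNReal.pow_ne_top (by norm_num)) hεmt
    have hc0 : 0 < b ^ (1/p) := ENNReal.rpow_pos hb0 hbt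
    filter_upwards [hconv.eventually (gt_mem_nhds hc0)] with n hn
    have h1 : (∫⁻ x, (‖un n x - u x‖₊ : ℝ≥0∞) ^ p ∂μ) = (eLpNorm (un n - u) q μ) ^ p := by
      simpa using lint_eq_eLpNorm_rpow p hp0 μ (un n - u)
    rw [h1]
    calc (eLpNorm (un n - u) q μ) ^ p ≤ (b ^ (1/p)) ^ p :=
          ENNReal.rpow_le_rpow hn.le hp0.le
      _ = b := by
          rw [← ENNReal.rpow_mul, one_div, inv_mul_cancel₀ hp0.ne', ENNReal.rpow_one]
  obtain ⟨φ, hφmono, hφ⟩ := Filter.extraction_forall_of_eventually hP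
  -- the weight
  set v : ℕ → X → ℝ≥0∞ := fun i x => (2:ℝ≥0∞)^i * (‖un (φ i) x - u x‖₊ : ℝ≥0∞) ^ p with hvdef
  have hvm : ∀ i, Measurable (v i) :=
    fun i => (measurable_const.mul (((hunm (φ i)).sub hu).enorm.pow_const p))
  set w : X → ℝ≥0∞ := fun x => (‖u x‖₊ : ℝ≥0∞) ^ p + ∑' i, v i x with hwdef
  have hwm : Measurable w := (hu.enorm.pow_const p).add (Measurable.ennreal_tsum hvm)
  -- geometric bound for the series part
  have hgeom : ∀ i, (2:ℝ≥0∞)^i * ((2⁻¹ : ℝ≥0∞) ^ (2*i+1) * εm) = (2⁻¹:ℝ≥0∞)^(i+1) * εm := by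
    intro i
    have : (2⁻¹ : ℝ≥0∞) ^ (2*i+1) = 2⁻¹ ^ i * 2⁻¹ ^ (i+1) := by
      rw [← pow_add]; ring_nf
    rw [this, ← mul_assoc, ← mul_assoc, two_pow_mul_inv_two_pow, one_mul]
  have htsum : (∑' i : ℕ, (2⁻¹:ℝ≥0∞)^(i+1) * εm) = εm := by
    rw [ENNReal.tsum_mul_right, ENNReal.tsum_geometric_add_one, ENNReal.one_sub_inv_two,
      inv_inv, ENNReal.inv_mul_cancel two_ne_zero (by norm_num), one_mul]
  -- integral of w over μ
  have hWsplit : (∫⁻ x, w x ∂μ) = ε + ∑' i, ∫⁻ x, v i x ∂μ := by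
    rw [hwdef]
    simp only
    rw [lintegral_add_left (show Measurable fun x => (‖u x‖₊ : ℝ≥0∞) ^ p from hu.enorm.pow_const p),
      lintegral_tsum (fun i => (hvm i).aemeasurable)]
  have hvint : ∀ i, (∫⁻ x, v i x ∂μ) ≤ (2⁻¹:ℝ≥0∞)^(i+1) * εm := by
    intro i
    rw [hvdef]
    simp only
    rw [lintegral_const_mul _ (show Measurable fun x => (‖un (φ i) x - u x‖₊ : ℝ≥0∞) ^ p from ((hunm (φ i)).sub hu).enorm.pow_const p)]
    calc (2:ℝ≥0∞)^i * ∫⁻ x, (‖un (φ i) x - u x‖₊ : ℝ≥0∞) ^ p ∂μ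
        ≤ (2:ℝ≥0∞)^i * ((2⁻¹ : ℝ≥0∞) ^ (2*i+1) * εm) := mul_le_mul_right (hφ i) _
      _ = (2⁻¹:ℝ≥0∞)^(i+1) * εm := hgeom i
  have hWle : (∫⁻ x, w x ∂μ) ≤ 2 * ε := by
    rw [hWsplit, two_mul]
    refine add_le_add le_rfl ?_
    calc (∑' i, ∫⁻ x, v i x ∂μ) ≤ ∑' i : ℕ, (2⁻¹:ℝ≥0∞)^(i+1) * εm :=
          ENNReal.tsum_le_tsum hvint
      _ = εm := htsum
      _ ≤ ε := hεmε
  have hWge : ε ≤ ∫⁻ x, w x ∂μ := by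
    rw [hεdef]
    exact lintegral_mono fun x => le_self_add
  have hWt : (∫⁻ x, w x ∂μ) < ⊤ :=
    hWle.trans_lt (by
      exact ENNReal.mul_lt_top (by norm_num) hεt)
  have hW0 : 0 < ∫⁻ x, w x ∂μ := hε0.trans_le hWge
  refine ⟨w, φ, hwm, hWt, hW0, hφmono, ?_⟩
  intro Y _ lam γ hγ hA
  set A := ∫⁻ y, w (γ y) ∂lam with hAdef
  set W := ∫⁻ x, w x ∂μ with hWdef
  -- pointwise bounds pulled back
  have hIu : (∫⁻ y, (‖u (γ y)‖₊ : ℝ≥0∞) ^ p ∂lam) ≤ A :=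
    lintegral_mono fun y => le_self_add
  have hIdiff : ∀ i, (∫⁻ y, (‖un (φ i) (γ y) - u (γ y)‖₊ : ℝ≥0∞) ^ p ∂lam)
      ≤ (2⁻¹:ℝ≥0∞)^i * A := by
    intro i
    have h1 : (2:ℝ≥0∞)^i * ∫⁻ y, (‖un (φ i) (γ y) - u (γ y)‖₊ : ℝ≥0∞) ^ p ∂lam ≤ A := by
      have hm : Measurable fun y => (‖un (φ i) (γ y) - u (γ y)‖₊ : ℝ≥0∞) ^ p :=
        (((hunm (φ i)).comp hγ).sub (hu.comp hγ)).enorm.pow_const p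
      rw [← lintegral_const_mul _ hm]
      refine lintegral_mono fun y => ?_
      exact le_trans (ENNReal.le_tsum i) le_add_self
    calc (∫⁻ y, (‖un (φ i) (γ y) - u (γ y)‖₊ : ℝ≥0∞) ^ p ∂lam)
        = (2⁻¹:ℝ≥0∞)^i * ((2:ℝ≥0∞)^i *
            ∫⁻ y, (‖un (φ i) (γ y) - u (γ y)‖₊ : ℝ≥0∞) ^ p ∂lam) := by
          rw [← mul_assoc, mul_comm ((2⁻¹:ℝ≥0∞)^i), two_pow_mul_inv_two_pow, one_mul]
      _ ≤ (2⁻¹:ℝ≥0∞)^i * A := mul_le_mul_right h1 _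
  -- L^p membership of pullbacks
  have huγ : MemLp (fun y => u (γ y)) q lam := by
    refine ⟨(hu.comp hγ).aestronglyMeasurable, ?_⟩
    have : (eLpNorm (fun y => u (γ y)) q lam) ^ p < ⊤ := by
      rw [← lint_eq_eLpNorm_rpow p hp0]
      exact lt_of_le_of_lt hIu hA
    exact lt_top_of_rpow_lt_top hp0 this
  have hdγ : ∀ i, MemLp (fun y => un (φ i) (γ y) - u (γ y)) q lam := by
    intro i
    refine ⟨(((hunm (φ i)).comp hγ).sub (hu.comp hγ)).aestronglyMeasurable, ?_⟩
    have : (eLpNorm (fun y => un (φ i) (γ y) - u (γ y)) q lam) ^ p < ⊤ := by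
      rw [← lint_eq_eLpNorm_rpow p hp0]
      refine lt_of_le_of_lt (hIdiff i) ?_
      exact ENNReal.mul_lt_top (ENNReal.pow_lt_top (by norm_num)) hA
    exact lt_top_of_rpow_lt_top hp0 this
  refine ⟨?_, ?_, ?_⟩
  · intro i
    have := (hdγ i).add huγ
    have heq : (fun y => un (φ i) (γ y) - u (γ y)) + (fun y => u (γ y))
        = fun y => un (φ i) (γ y) := by
      funext y; simp
    rwa [heq] at this
  · -- convergence via squeeze
    have hbd : ∀ i, eLpNorm (fun y => un (φ i) (γ y) - u (γ y)) q lam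
        ≤ ((2⁻¹:ℝ≥0∞)^i * A) ^ (1/p) := by
      intro i
      have h1 : (eLpNorm (fun y => un (φ i) (γ y) - u (γ y)) q lam) ^ p
          ≤ (2⁻¹:ℝ≥0∞)^i * A := by
        rw [← lint_eq_eLpNorm_rpow p hp0]; exact hIdiff i
      calc eLpNorm (fun y => un (φ i) (γ y) - u (γ y)) q lam
          = ((eLpNorm (fun y => un (φ i) (γ y) - u (γ y)) q lam) ^ p) ^ (1/p) := by
            rw [← ENNReal.rpow_mul, mul_one_div, div_self hp0.ne', ENNReal.rpow_one]
        _ ≤ ((2⁻¹:ℝ≥0∞)^i * A) ^ (1/p) := ENNReal.rpow_le_rpow h1 (by positivity)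
    have hlim : Filter.Tendsto (fun i => ((2⁻¹:ℝ≥0∞)^i * A) ^ (1/p))
        Filter.atTop (nhds 0) := by
      have h1 : Filter.Tendsto (fun i : ℕ => (2⁻¹:ℝ≥0∞)^i * A) Filter.atTop (nhds 0) := by
        have := ENNReal.Tendsto.mul_const
          (ENNReal.tendsto_pow_atTop_nhds_zero_of_lt_one
            (by norm_num : (2⁻¹:ℝ≥0∞) < 1)) (Or.inr hA.ne)
        simpa using this
      have h2 := Filter.Tendsto.ennrpow_const (1/p) h1
      rwa [ENNReal.zero_rpow_of_pos (by positivity)] at h2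
    exact tendsto_of_tendsto_of_tendsto_of_le_of_le tendsto_const_nhds hlim
      (fun i => zero_le) hbd
  · -- the final inequality
    have hWne : W ≠ 0 := hW0.ne'
    have hWnetop : W ≠ ⊤ := hWt.ne
    calc (∫⁻ y, (‖u (γ y)‖₊ : ℝ≥0∞) ^ p ∂lam) ≤ A := hIu
      _ = A / W * W := (ENNReal.div_mul_cancel hWne hWnetop).symm
      _ ≤ A / W * (2 * ε) := mul_le_mul_right hWle _
      _ = 2 * (A / W) * ε := by ring
end
end

section
/- Let Ω ⊂ ℝ^m be a bounded open domain satisfying the segment condition. Then there exists γ₀ > 0 and, for every 0 < γ < γ₀, a smooth diffeomorphism Φ_γ : ℝ^m → ℝ^m such that Φ_γ(Ω̄) ⊂ Ω and such that, as γ → 0, Φ_γ converges to the identity map uniformly on ℝ^m together with all its derivatives: for every j ∈ ℕ, D^j Φ_γ → D^j(id) uniformly on ℝ^m (i.e. Φ_γ → id, DΦ_γ → Id, and D^j Φ_γ → 0 uniformly for j ≥ 2). -/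
open Set
noncomputable section

/-- `Ω` satisfies the segment condition: for every boundary point `x` there are a
neighbourhood `U` of `x` and a nonzero vector `z` such that `y + t z ∈ Ω` for every
`y ∈ U ∩ Ω̄` and every `0 < t < 1`. -/
def SegmentCondition (m : ℕ) (Ω : Set (Eucl m)) : Prop :=
  ∀ x ∈ frontier Ω, ∃ U : Set (Eucl m), IsOpen U ∧ x ∈ U ∧ ∃ z : Eucl m, z ≠ 0 ∧
    ∀ y ∈ U ∩ closure Ω, ∀ t : ℝ, 0 < t → t < 1 → y + t • z ∈ Ω

section Auxiliary

open scoped NNReal ENNReal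

variable {E F : Type*} [NormedAddCommGroup E] [NormedSpace ℝ E]
  [NormedAddCommGroup F] [NormedSpace ℝ F]

private lemma bddDerivs (f : E → F) (hf : ContDiff ℝ (⊤ : ℕ∞) f) (h : HasCompactSupport f)
    (j : ℕ) : ∃ C : ℝ, 0 ≤ C ∧ ∀ x, ‖iteratedFDeriv ℝ j f x‖ ≤ C := by
  obtain ⟨C, hC⟩ := (h.iteratedFDeriv j).exists_bound_of_continuous
    (hf.continuous_iteratedFDeriv (by exact_mod_cast le_top))
  exact ⟨max C 0, le_max_right _ _, fun x => (hC x).trans (le_max_left _ _)⟩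

private lemma lipOfSupp (f : E → F) (hf : ContDiff ℝ (⊤ : ℕ∞) f) (h : HasCompactSupport f) :
    ∃ K : ℝ≥0, LipschitzWith K f := by
  obtain ⟨C, hC⟩ := (h.fderiv ℝ).exists_bound_of_continuous
    (hf.continuous_fderiv (by simp))
  refine ⟨C.toNNReal, lipschitzWith_of_nnnorm_fderiv_le
    (hf.differentiable (by simp)) fun x => ?_⟩
  rw [← NNReal.coe_le_coe, coe_nnnorm, Real.coe_toNNReal']
  exact (hC x).trans (le_max_left _ _)

private lemma normIdDeriv (i : ℕ) (hi : 1 ≤ i) (x : E) :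
    ‖iteratedFDeriv ℝ i (fun x : E => x) x‖ ≤ 1 := by
  cases i with
  | zero => omega
  | succ n =>
    rw [← norm_iteratedFDeriv_fderiv]
    have : (fderiv ℝ (fun x : E => x)) = fun _ : E => ContinuousLinearMap.id ℝ E := by
      ext1 y; exact fderiv_id'
    rw [this]
    cases n with
    | zero =>
      rw [norm_iteratedFDeriv_zero]
      exact ContinuousLinearMap.norm_id_le
    | succ k =>
      rw [iteratedFDeriv_const_of_ne (by omega)]
      simp

private lemma lip_smul {f : E → F} {K : ℝ≥0} (h : LipschitzWith K f) (γ : ℝ) :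
    LipschitzWith (‖γ‖₊ * K) (fun x => γ • f x) := by
  intro x y
  calc edist (γ • f x) (γ • f y) = (‖γ‖₊ : ℝ≥0∞) * edist (f x) (f y) := by
        rw [edist_smul₀, ENNReal.smul_def, smul_eq_mul]
    _ ≤ (‖γ‖₊ : ℝ≥0∞) * ((K : ℝ≥0∞) * edist x y) := mul_le_mul_right (h x y) _
    _ = ((‖γ‖₊ * K : ℝ≥0) : ℝ≥0∞) * edist x y := by
        push_cast
        rw [mul_assoc]

/-- One elementary inward perturbation. -/
private def pert (γ : ℝ) (p : (E → ℝ) × E) (x : E) : E := x + γ • (p.1 x • p.2)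

/-- The correction term of the composition of elementary perturbations. -/
private def corr : List ((E → ℝ) × E) → ℝ → E → E
  | [] => fun _ _ => 0
  | p :: ps => fun γ x => p.1 x • p.2 + corr ps γ (pert γ p x)

/-- Composition of the elementary perturbations along a list. -/
private def seqMap : List ((E → ℝ) × E) → ℝ → E → E
  | [] => fun _ x => x
  | p :: ps => fun γ x => seqMap ps γ (pert γ p x)

private lemma seqMap_eq (L : List ((E → ℝ) × E)) (γ : ℝ) (x : E) :
    seqMap L γ x = x + γ • corr L γ x := by
  induction L generalizing x with
  | nil => simp [seqMap, corr]
  | cons p ps ih =>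
    show seqMap ps γ (pert γ p x) = _
    rw [ih]
    simp only [corr, pert, smul_add]
    abel

private lemma pert_contDiff (γ : ℝ) (p : (E → ℝ) × E) (hp : ContDiff ℝ (⊤ : ℕ∞) p.1) :
    ContDiff ℝ (⊤ : ℕ∞) (pert γ p) :=
  contDiff_id.add (((hp.smul contDiff_const)).const_smul γ)

private lemma corr_contDiff (L : List ((E → ℝ) × E)) (h : ∀ p ∈ L, ContDiff ℝ (⊤ : ℕ∞) p.1)
    (γ : ℝ) : ContDiff ℝ (⊤ : ℕ∞) (corr L γ) := by
  induction L with
  | nil => simpa [corr] using contDiff_const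
  | cons p ps ih =>
    have hp := h p (List.mem_cons_self (a := p) (l := ps))
    have hps := ih (fun q hq => h q (List.mem_cons_of_mem _ hq))
    exact (hp.smul contDiff_const).add (hps.comp (pert_contDiff γ p hp))

private lemma seqMap_contDiff (L : List ((E → ℝ) × E)) (h : ∀ p ∈ L, ContDiff ℝ (⊤ : ℕ∞) p.1)
    (γ : ℝ) : ContDiff ℝ (⊤ : ℕ∞) (seqMap L γ) := by
  have : seqMap L γ = fun x => x + γ • corr L γ x := funext fun x => seqMap_eq L γ x
  rw [this]
  exact contDiff_id.add ((corr_contDiff L h γ).const_smul γ)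

private lemma seqMap_mem (Ω : Set E) (L : List ((E → ℝ) × E)) (γ : ℝ) (hγ0 : 0 < γ)
    (hγ1 : γ < 1)
    (hgood : ∀ p ∈ L, (∀ y, p.1 y ∈ Icc (0:ℝ) 1) ∧
      (∀ y ∈ closure Ω, p.1 y ≠ 0 → ∀ t : ℝ, 0 < t → t < 1 → y + t • p.2 ∈ Ω)) :
    ∀ x ∈ closure Ω, (x ∈ Ω ∨ ∃ p ∈ L, p.1 x = 1) → seqMap L γ x ∈ Ω := by
  induction L with
  | nil =>
    intro x _ hx
    rcases hx with hx | ⟨p, hp, _⟩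
    · exact hx
    · exact absurd hp (List.not_mem_nil)
  | cons p ps ih =>
    intro x hxcl hx
    have hp := hgood p (List.mem_cons_self (a := p) (l := ps))
    have hps := fun q hq => hgood q (List.mem_cons_of_mem _ hq)
    by_cases h0 : p.1 x = 0
    · have hpert : pert γ p x = x := by simp [pert, h0]
      show seqMap ps γ (pert γ p x) ∈ Ω
      rw [hpert]
      refine ih hps x hxcl ?_
      rcases hx with hx | ⟨q, hq, hq1⟩
      · exact Or.inl hx
      · rcases List.mem_cons.1 hq with rfl | hq'
        · exact absurd hq1 (by rw [h0]; norm_num)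
        · exact Or.inr ⟨q, hq', hq1⟩
    · have hpos : 0 < p.1 x := lt_of_le_of_ne (hp.1 x).1 (Ne.symm h0)
      have ht1 : γ * p.1 x < 1 :=
        lt_of_le_of_lt (mul_le_of_le_one_right hγ0.le (hp.1 x).2) hγ1
      have ht0 : 0 < γ * p.1 x := mul_pos hγ0 hpos
      have hmem : pert γ p x ∈ Ω := by
        have := hp.2 x hxcl h0 (γ * p.1 x) ht0 ht1
        simpa [pert, smul_smul] using this
      show seqMap ps γ (pert γ p x) ∈ Ω
      exact ih hps _ (subset_closure hmem) (Or.inl hmem)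

private lemma corr_bound (L : List ((E → ℝ) × E))
    (h : ∀ p ∈ L, ContDiff ℝ (⊤ : ℕ∞) p.1 ∧ HasCompactSupport p.1) (j : ℕ) :
    ∃ C : ℝ, 0 ≤ C ∧ ∀ γ ∈ Icc (0:ℝ) 1, ∀ x, ‖iteratedFDeriv ℝ j (corr L γ) x‖ ≤ C := by
  induction L generalizing j with
  | nil =>
    refine ⟨0, le_refl _, fun γ _ x => ?_⟩
    show ‖iteratedFDeriv ℝ j (fun _ : E => (0:E)) x‖ ≤ 0
    rw [iteratedFDeriv_zero_fun]
    simp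
  | cons p ps ih =>
    have hp := h p (List.mem_cons_self (a := p) (l := ps))
    have hps := fun q hq => h q (List.mem_cons_of_mem _ hq)
    have hps1 : ∀ q ∈ ps, ContDiff ℝ (⊤ : ℕ∞) q.1 := fun q hq => (hps q hq).1
    set fp : E → E := fun x => p.1 x • p.2 with hfp
    have hfpsm : ContDiff ℝ (⊤ : ℕ∞) fp := hp.1.smul contDiff_const
    have hfpsupp : HasCompactSupport fp := by
      apply hp.2.mono
      intro x hx
      simp only [Function.mem_support, hfp] at hx ⊢
      intro h0
      exact hx (by rw [h0, zero_smul])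
    choose A hA0 hA using bddDerivs fp hfpsm hfpsupp
    choose Cps hC0 hCps using ih hps
    set Cg : ℝ := ∑ i ∈ Finset.range (j+1), Cps i with hCg
    have hCgnn : 0 ≤ Cg := Finset.sum_nonneg fun i _ => hC0 i
    have hCgle : ∀ i, i ≤ j → Cps i ≤ Cg := fun i hi =>
      Finset.single_le_sum (fun i _ => hC0 i) (Finset.mem_range.2 (Nat.lt_succ_of_le hi))
    set D : ℝ := 1 + ∑ i ∈ Finset.range (j+1), A i with hD
    have hD1 : 1 ≤ D := le_add_of_nonneg_right (Finset.sum_nonneg fun i _ => hA0 i)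
    have hDle : ∀ i, i ≤ j → 1 + A i ≤ D := by
      intro i hi
      have : A i ≤ ∑ i ∈ Finset.range (j+1), A i :=
        Finset.single_le_sum (fun i _ => hA0 i) (Finset.mem_range.2 (Nat.lt_succ_of_le hi))
      simp only [hD]; linarith
    have hD0 : (0:ℝ) ≤ D := zero_le_one.trans hD1
    refine ⟨A j + j.factorial * Cg * D ^ j,
      add_nonneg (hA0 j) (mul_nonneg (mul_nonneg (Nat.cast_nonneg _) hCgnn) (pow_nonneg hD0 j)),
      fun γ hγ x => ?_⟩
    have hTder : ∀ x, ∀ i, 1 ≤ i → i ≤ j → ‖iteratedFDeriv ℝ i (pert γ p) x‖ ≤ D ^ i := by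
      intro x i hi1 hij
      have heq : iteratedFDeriv ℝ i (pert γ p) x
          = iteratedFDeriv ℝ i (fun x : E => x) x
            + iteratedFDeriv ℝ i (fun x => γ • fp x) x := by
        have h1 : ContDiff ℝ (i : ℕ) (fun x : E => x) := contDiff_id
        have h2 : ContDiff ℝ (i : ℕ) (fun x => γ • fp x) :=
          (hfpsm.const_smul γ).of_le (by exact_mod_cast le_top)
        rw [← iteratedFDeriv_add_apply' h1.contDiffAt h2.contDiffAt]
        rfl
      have hsmul : iteratedFDeriv ℝ i (fun x => γ • fp x) x = γ • iteratedFDeriv ℝ i fp x :=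
        iteratedFDeriv_const_smul_apply' (hfpsm.of_le (by exact_mod_cast le_top)).contDiffAt
      calc ‖iteratedFDeriv ℝ i (pert γ p) x‖
          ≤ ‖iteratedFDeriv ℝ i (fun x : E => x) x‖
            + ‖iteratedFDeriv ℝ i (fun x => γ • fp x) x‖ := by
            rw [heq]; exact norm_add_le _ _
        _ ≤ 1 + A i := by
            refine add_le_add (normIdDeriv i hi1 x) ?_
            rw [hsmul]
            refine le_trans (ContinuousMultilinearMap.opNorm_smul_le γ _) ?_
            calc ‖γ‖ * ‖iteratedFDeriv ℝ i fp x‖ ≤ 1 * A i := by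
                  apply mul_le_mul _ (hA i x) (norm_nonneg _) zero_le_one
                  rw [Real.norm_eq_abs, abs_of_nonneg hγ.1]
                  exact hγ.2
              _ = A i := one_mul _
        _ ≤ D := hDle i hij
        _ ≤ D ^ i := le_self_pow₀ hD1 (by omega)
    have hcomp : ‖iteratedFDeriv ℝ j (corr ps γ ∘ pert γ p) x‖ ≤ j.factorial * Cg * D ^ j := by
      apply norm_iteratedFDeriv_comp_le (corr_contDiff ps hps1 γ) (pert_contDiff γ p hp.1)
        (by exact_mod_cast le_top) x
      · intro i hi
        exact (hCps i γ hγ _).trans (hCgle i hi)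
      · intro i hi1 hij
        exact hTder x i hi1 hij
    have heq2 : iteratedFDeriv ℝ j (corr (p :: ps) γ) x
        = iteratedFDeriv ℝ j fp x + iteratedFDeriv ℝ j (corr ps γ ∘ pert γ p) x := by
      have h1 : ContDiff ℝ (j : ℕ) fp := hfpsm.of_le (by exact_mod_cast le_top)
      have h2 : ContDiff ℝ (j : ℕ) (corr ps γ ∘ pert γ p) :=
        ((corr_contDiff ps hps1 γ).comp (pert_contDiff γ p hp.1)).of_le (by exact_mod_cast le_top)
      rw [← iteratedFDeriv_add_apply' h1.contDiffAt h2.contDiffAt]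
      rfl
    calc ‖iteratedFDeriv ℝ j (corr (p :: ps) γ) x‖
        ≤ ‖iteratedFDeriv ℝ j fp x‖ + ‖iteratedFDeriv ℝ j (corr ps γ ∘ pert γ p) x‖ := by
          rw [heq2]; exact norm_add_le _ _
      _ ≤ A j + j.factorial * Cg * D ^ j := add_le_add (hA j x) hcomp

private lemma exists_smooth_inverse_add [FiniteDimensional ℝ E] (f : E → E)
    (hf : ContDiff ℝ (⊤ : ℕ∞) f) (c : ℝ≥0) (hc : c < 1) (hl : LipschitzWith c f) :
    ∃ g : E → E, ContDiff ℝ (⊤ : ℕ∞) g ∧ (∀ x, g (x + f x) = x) ∧ (∀ y, g y + f (g y) = y) := by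
  have h1top : ((⊤ : ℕ∞) : WithTop ℕ∞) ≠ 0 := by
    simp
  set T : E → E := fun x => x + f x with hT
  have hTsmooth : ContDiff ℝ (⊤ : ℕ∞) T := contDiff_id.add hf
  have happrox : ApproximatesLinearOn T
      (((ContinuousLinearEquiv.refl ℝ E) : E →L[ℝ] E)) univ c := by
    intro x _ y _
    have h := hl.dist_le_mul x y
    simp only [dist_eq_norm] at h ⊢
    calc ‖T x - T y - ((ContinuousLinearEquiv.refl ℝ E) : E →L[ℝ] E) (x - y)‖
        = ‖f x - f y‖ := by simp [hT]; congr 1; abel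
      _ ≤ c * ‖x - y‖ := h
  have hc' : Subsingleton E ∨ c < ‖(((ContinuousLinearEquiv.refl ℝ E).symm) :
      E →L[ℝ] E)‖₊⁻¹ := by
    rcases subsingleton_or_nontrivial E with h | h
    · exact Or.inl h
    · refine Or.inr ?_
      rw [ContinuousLinearEquiv.refl_symm]
      rw [show (((ContinuousLinearEquiv.refl ℝ E)) : E →L[ℝ] E)
        = ContinuousLinearMap.id ℝ E from rfl]
      rw [ContinuousLinearMap.nnnorm_id]
      simpa using hc
  let H : E ≃ₜ E := happrox.toHomeomorph T hc'
  have hHcoe : ∀ x, H x = T x := fun x => rfl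
  have hTinj : Function.Injective T := H.injective
  refine ⟨H.symm, ?_, ?_, ?_⟩
  · rw [contDiff_iff_contDiffAt]
    intro y
    set x := H.symm y with hx
    have hyx : T x = y := H.apply_symm_apply y
    set u := fderiv ℝ f x with hu
    have hdf : HasFDerivAt f u x :=
      ((hf.differentiable (by simp)) x).hasFDerivAt
    have hnorm : ‖u‖ < 1 := lt_of_le_of_lt (norm_fderiv_le_of_lipschitz ℝ hl) hc
    set Acl : E →L[ℝ] E := ContinuousLinearMap.id ℝ E + u with hAcl
    have hAinj : Function.Injective Acl := by
      rw [injective_iff_map_eq_zero]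
      intro v hv
      by_contra hv0
      have h1 : ‖v + u v‖ = 0 := by simpa [hAcl] using congrArg norm hv
      have h2 : ‖u v‖ < ‖v‖ := by
        calc ‖u v‖ ≤ ‖u‖ * ‖v‖ := u.le_opNorm v
          _ < 1 * ‖v‖ := by
              apply mul_lt_mul_of_pos_right hnorm
              simpa [norm_pos_iff] using hv0
          _ = ‖v‖ := one_mul _
      have h3 : ‖v‖ ≤ ‖v + u v‖ + ‖u v‖ := by
        simpa using norm_sub_le (v + u v) (u v)
      rw [h1] at h3
      linarith
    have hAbij : Function.Bijective Acl.toLinearMap :=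
      ⟨hAinj, (LinearMap.injective_iff_surjective).1 hAinj⟩
    let A : E ≃L[ℝ] E := (LinearEquiv.ofBijective Acl.toLinearMap hAbij).toContinuousLinearEquiv
    have hAeq : (A : E →L[ℝ] E) = Acl := by ext v; rfl
    have hdT : HasFDerivAt T ((A : E →L[ℝ] E)) x := by
      rw [hAeq]
      exact (hasFDerivAt_id x).add hdf
    have hTat : ContDiffAt ℝ (⊤ : ℕ∞) T x := hTsmooth.contDiffAt
    have hloc : ContDiffAt ℝ (⊤ : ℕ∞) (hTat.localInverse hdT h1top) (T x) :=
      hTat.to_localInverse hdT h1top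
    have hev : ∀ᶠ z in nhds (T x), T (hTat.localInverse hdT h1top z) = z :=
      (hTat.hasStrictFDerivAt' hdT h1top).eventually_right_inverse
    have heq : (H.symm : E → E) =ᶠ[nhds (T x)] (hTat.localInverse hdT h1top) := by
      filter_upwards [hev] with z hz
      apply hTinj
      rw [hz]
      exact H.apply_symm_apply z
    rw [← hyx]
    exact hloc.congr_of_eventuallyEq heq
  · intro x
    exact H.symm_apply_apply x
  · intro y
    have : T (H.symm y) = y := H.apply_symm_apply y
    simpa [hT] using this

private lemma seq_inverse [FiniteDimensional ℝ E] (L : List ((E → ℝ) × E)) (γ : ℝ)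
    (h : ∀ p ∈ L, ContDiff ℝ (⊤ : ℕ∞) p.1 ∧
      ∃ c : ℝ≥0, c < 1 ∧ LipschitzWith c (fun x => γ • (p.1 x • p.2))) :
    ∃ g : E → E, ContDiff ℝ (⊤ : ℕ∞) g ∧
      (∀ x, g (seqMap L γ x) = x) ∧ (∀ y, seqMap L γ (g y) = y) := by
  induction L with
  | nil => exact ⟨id, contDiff_id, fun x => rfl, fun y => rfl⟩
  | cons p ps ih =>
    obtain ⟨g₂, hg₂, hg₂l, hg₂r⟩ := ih (fun q hq => h q (List.mem_cons_of_mem _ hq))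
    obtain ⟨hps, c, hc, hl⟩ := h p (List.mem_cons_self (a := p) (l := ps))
    obtain ⟨g₁, hg₁, hg₁l, hg₁r⟩ := exists_smooth_inverse_add
      (fun x => γ • (p.1 x • p.2)) (((hps.smul contDiff_const)).const_smul γ) c hc hl
    refine ⟨g₁ ∘ g₂, hg₁.comp hg₂, fun x => ?_, fun y => ?_⟩
    · show g₁ (g₂ (seqMap ps γ (pert γ p x))) = x
      rw [hg₂l (pert γ p x)]
      exact hg₁l x
    · show seqMap ps γ (pert γ p (g₁ (g₂ y))) = y
      have : pert γ p (g₁ (g₂ y)) = g₂ y := hg₁r (g₂ y)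
      rw [this, hg₂r]

private lemma exists_unif_lip (L : List ((E → ℝ) × E))
    (h : ∀ p ∈ L, ContDiff ℝ (⊤ : ℕ∞) p.1 ∧ HasCompactSupport p.1) :
    ∃ K : ℝ≥0, ∀ p ∈ L, LipschitzWith K (fun x => p.1 x • p.2) := by
  induction L with
  | nil => exact ⟨0, fun p hp => absurd hp (List.not_mem_nil)⟩
  | cons p ps ih =>
    obtain ⟨K2, hK2⟩ := ih (fun q hq => h q (List.mem_cons_of_mem _ hq))
    have hp := h p (List.mem_cons_self (a := p) (l := ps))
    have hsupp : HasCompactSupport (fun x => p.1 x • p.2) := by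
      apply hp.2.mono
      intro x hx
      simp only [Function.mem_support] at hx ⊢
      intro h0
      exact hx (by rw [h0, zero_smul])
    obtain ⟨K1, hK1⟩ := lipOfSupp _ (hp.1.smul contDiff_const) hsupp
    refine ⟨max K1 K2, fun q hq => ?_⟩
    rcases List.mem_cons.1 hq with rfl | hq'
    · exact hK1.weaken (le_max_left _ _)
    · exact (hK2 q hq').weaken (le_max_right _ _)

end Auxiliary

/-- **Inward dilation of a domain satisfying the segment condition.**
Let `Ω ⊆ ℝ^m` be a bounded open domain satisfying the segment condition. Then there are
`γ₀ > 0` and, for `0 < γ < γ₀`, smooth diffeomorphisms `Φ_γ : ℝ^m → ℝ^m` (with smooth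
inverses `Ψ_γ`) such that `Φ_γ(Ω̄) ⊆ Ω`, and `Φ_γ` converges to the identity uniformly on
`ℝ^m` together with all its derivatives as `γ → 0`. -/


theorem segment_condition_inward_diffeomorphisms
    (m : ℕ) (hm : 1 ≤ m) (Ω : Set (Eucl m)) (hΩo : IsOpen Ω)
    (hΩb : Bornology.IsBounded Ω) (hseg : SegmentCondition m Ω) :
    ∃ γ₀ : ℝ, 0 < γ₀ ∧ ∃ Φ Ψ : ℝ → Eucl m → Eucl m,
      (∀ γ ∈ Set.Ioo (0 : ℝ) γ₀,
        ContDiff ℝ (⊤ : ℕ∞) (Φ γ) ∧ ContDiff ℝ (⊤ : ℕ∞) (Ψ γ) ∧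
        (∀ x, Ψ γ (Φ γ x) = x) ∧ (∀ x, Φ γ (Ψ γ x) = x) ∧
        (∀ x ∈ closure Ω, Φ γ x ∈ Ω)) ∧
      ∀ j : ℕ, TendstoUniformly (fun γ : ℝ => iteratedFDeriv ℝ j (Φ γ))
        (iteratedFDeriv ℝ j (fun x : Eucl m => x)) (nhdsWithin 0 (Set.Ioo 0 γ₀)) := by
  classical
  choose! U hUo hxU z hzne hsegp using hseg
  have hrad : ∀ x ∈ frontier Ω, ∃ ε : ℝ, 0 < ε ∧ Metric.ball x ε ⊆ U x := by
    intro x hx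
    rcases Metric.isOpen_iff.1 (hUo x hx) x (hxU x hx) with ⟨ε, hε, hb⟩
    exact ⟨ε, hε, hb⟩
  choose! ε hε hball using hrad
  have hbump : ∀ x ∈ frontier Ω, ∃ ψ : Eucl m → ℝ,
      ContDiff ℝ (⊤ : ℕ∞) ψ ∧ HasCompactSupport ψ ∧ (∀ y, ψ y ∈ Set.Icc (0:ℝ) 1) ∧
      (∀ y, ψ y ≠ 0 → y ∈ Metric.ball x (ε x)) ∧
      (∀ y ∈ Metric.ball x (ε x / 2), ψ y = 1) := by
    intro x hx
    have hεx := hε x hx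
    set φ : ContDiffBump x := ⟨ε x / 2, ε x, by linarith, by linarith⟩
    refine ⟨φ, φ.contDiff, φ.hasCompactSupport, fun y => ⟨φ.nonneg, φ.le_one⟩,
      fun y hy => ?_, fun y hy =>
        φ.one_of_mem_closedBall (Metric.ball_subset_closedBall hy)⟩
    have : y ∈ Function.support φ := Function.mem_support.2 hy
    rwa [φ.support_eq] at this
  choose! ψ hψsm hψsupp hψicc hψsub hψone using hbump
  have hcl : IsCompact (closure Ω) := hΩb.isCompact_closure
  have hfr : IsCompact (frontier Ω) :=
    hcl.of_isClosed_subset isClosed_frontier frontier_subset_closure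
  have hcov : frontier Ω ⊆ ⋃ x ∈ frontier Ω, Metric.ball x (ε x / 2) := fun x hx =>
    Set.mem_biUnion hx (Metric.mem_ball_self (by linarith [hε x hx]))
  obtain ⟨t, htsub, htfin, htcov⟩ :=
    hfr.elim_finite_subcover_image (fun x _ => Metric.isOpen_ball) hcov
  set lst : List (Eucl m) := htfin.toFinset.toList with hlstdef
  have hlst : ∀ x, x ∈ lst ↔ x ∈ t := fun x => by
    simp [hlstdef, Set.Finite.mem_toFinset]
  set L : List ((Eucl m → ℝ) × Eucl m) := lst.map (fun x => (ψ x, z x)) with hLdef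
  have hmemL : ∀ p ∈ L, ∃ x, x ∈ frontier Ω ∧ p = (ψ x, z x) := by
    intro p hp
    rcases List.mem_map.1 hp with ⟨x, hx, rfl⟩
    exact ⟨x, htsub ((hlst x).1 hx), rfl⟩
  have hLsm : ∀ p ∈ L, ContDiff ℝ (⊤ : ℕ∞) p.1 := by
    intro p hp
    rcases hmemL p hp with ⟨x, hx, rfl⟩
    exact hψsm x hx
  have hLcd : ∀ p ∈ L, ContDiff ℝ (⊤ : ℕ∞) p.1 ∧ HasCompactSupport p.1 := by
    intro p hp
    rcases hmemL p hp with ⟨x, hx, rfl⟩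
    exact ⟨hψsm x hx, hψsupp x hx⟩
  have hLgood : ∀ p ∈ L, (∀ y, p.1 y ∈ Set.Icc (0:ℝ) 1) ∧
      (∀ y ∈ closure Ω, p.1 y ≠ 0 → ∀ s : ℝ, 0 < s → s < 1 → y + s • p.2 ∈ Ω) := by
    intro p hp
    rcases hmemL p hp with ⟨x, hx, rfl⟩
    refine ⟨hψicc x hx, fun y hycl hy0 s hs0 hs1 => ?_⟩
    have hyU : y ∈ U x := hball x hx (hψsub x hx y hy0)
    exact hsegp x hx y ⟨hyU, hycl⟩ s hs0 hs1
  have hcover1 : ∀ y ∈ frontier Ω, ∃ p ∈ L, p.1 y = 1 := by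
    intro y hy
    rcases Set.mem_iUnion₂.1 (htcov hy) with ⟨x, hxt, hyball⟩
    refine ⟨(ψ x, z x), List.mem_map.2 ⟨x, (hlst x).2 hxt, rfl⟩, ?_⟩
    exact hψone x (htsub hxt) y hyball
  obtain ⟨K, hK⟩ := exists_unif_lip L hLcd
  set γ₀ : ℝ := min 1 (1 / ((K : ℝ) + 1)) with hγ₀def
  have hKpos : (0:ℝ) < (K : ℝ) + 1 := by positivity
  have hγ₀pos : 0 < γ₀ := lt_min one_pos (by positivity)
  have hγ₀le1 : γ₀ ≤ 1 := min_le_left _ _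
  set Φ : ℝ → Eucl m → Eucl m := fun γ => seqMap L γ with hΦdef
  set Ψ : ℝ → Eucl m → Eucl m := fun γ =>
    if h : ∃ g : Eucl m → Eucl m, ContDiff ℝ (⊤ : ℕ∞) g ∧
        (∀ x, g (seqMap L γ x) = x) ∧ (∀ y, seqMap L γ (g y) = y) then h.choose
    else id with hΨdef
  refine ⟨γ₀, hγ₀pos, Φ, Ψ, fun γ hγ => ?_, fun j => ?_⟩
  · -- diffeomorphism properties for `γ ∈ Ioo 0 γ₀`
    have hγ1 : γ < 1 := lt_of_lt_of_le hγ.2 hγ₀le1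
    have hγK : γ * (K : ℝ) < 1 := by
      have h2 : γ < 1 / ((K : ℝ) + 1) := lt_of_lt_of_le hγ.2 (min_le_right _ _)
      have h3 : γ * ((K : ℝ) + 1) < 1 := (lt_div_iff₀ hKpos).1 h2
      nlinarith [hγ.1]
    have hinv : ∃ g : Eucl m → Eucl m, ContDiff ℝ (⊤ : ℕ∞) g ∧
        (∀ x, g (seqMap L γ x) = x) ∧ (∀ y, seqMap L γ (g y) = y) := by
      apply seq_inverse L γ
      intro p hp
      refine ⟨hLsm p hp, ‖γ‖₊ * K, ?_, lip_smul (hK p hp) γ⟩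
      rw [← NNReal.coe_lt_coe, NNReal.coe_mul, NNReal.coe_one]
      have hn : (‖γ‖₊ : ℝ) = γ := by rw [coe_nnnorm, Real.norm_eq_abs, abs_of_pos hγ.1]
      rw [hn]
      exact hγK
    have hΨeq : Ψ γ = hinv.choose := by
      simp only [hΨdef]
      rw [dif_pos hinv]
    refine ⟨seqMap_contDiff L hLsm γ, ?_, ?_, ?_, ?_⟩
    · rw [hΨeq]; exact hinv.choose_spec.1
    · intro x; rw [hΨeq]; exact hinv.choose_spec.2.1 x
    · intro x; rw [hΨeq]; exact hinv.choose_spec.2.2 x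
    · intro x hx
      apply seqMap_mem Ω L γ hγ.1 hγ1 hLgood x hx
      by_cases hxΩ : x ∈ Ω
      · exact Or.inl hxΩ
      · refine Or.inr (hcover1 x ?_)
        rw [hΩo.frontier_eq]
        exact ⟨hx, hxΩ⟩
  · -- uniform convergence of all derivatives
    obtain ⟨C, hC0, hC⟩ := corr_bound L hLcd j
    rw [Metric.tendstoUniformly_iff]
    intro εp hεp
    have hδpos : 0 < εp / (C + 1) := by positivity
    have h1 : ∀ᶠ γ in nhdsWithin 0 (Set.Ioo 0 γ₀), γ ∈ Set.Ioo (0:ℝ) γ₀ :=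
      eventually_mem_nhdsWithin
    have h2 : ∀ᶠ γ in nhdsWithin 0 (Set.Ioo 0 γ₀), |γ| < εp / (C + 1) := by
      apply Filter.Eventually.filter_mono nhdsWithin_le_nhds
      filter_upwards [Metric.ball_mem_nhds (0:ℝ) hδpos] with γ hγ
      simpa [Real.dist_eq] using hγ
    filter_upwards [h1, h2] with γ hγIoo hγsmall
    intro x
    have hγIcc : γ ∈ Set.Icc (0:ℝ) 1 :=
      ⟨hγIoo.1.le, (hγIoo.2.trans_le (min_le_left _ _)).le⟩
    have hcsm : ContDiff ℝ (j : ℕ) (corr L γ) :=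
      (corr_contDiff L hLsm γ).of_le (by exact_mod_cast le_top)
    have hone : iteratedFDeriv ℝ j (Φ γ) x
        = iteratedFDeriv ℝ j (fun x : Eucl m => x) x
          + γ • iteratedFDeriv ℝ j (corr L γ) x := by
      have hΦeq : Φ γ = fun x => x + γ • corr L γ x := funext fun x => seqMap_eq L γ x
      have h1' : ContDiff ℝ (j : ℕ) (fun x : Eucl m => x) := contDiff_id
      have h2' : ContDiff ℝ (j : ℕ) (fun x : Eucl m => γ • corr L γ x) := hcsm.const_smul γ
      rw [hΦeq, iteratedFDeriv_add_apply' h1'.contDiffAt h2'.contDiffAt, iteratedFDeriv_const_smul_apply' hcsm.contDiffAt]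
    rw [dist_eq_norm, hone]
    have hdiff : iteratedFDeriv ℝ j (fun x : Eucl m => x) x
        - (iteratedFDeriv ℝ j (fun x : Eucl m => x) x + γ • iteratedFDeriv ℝ j (corr L γ) x)
        = -(γ • iteratedFDeriv ℝ j (corr L γ) x) := by abel
    rw [hdiff, norm_neg]
    calc ‖γ • iteratedFDeriv ℝ j (corr L γ) x‖
        ≤ ‖γ‖ * ‖iteratedFDeriv ℝ j (corr L γ) x‖ :=
          ContinuousMultilinearMap.opNorm_smul_le γ _
      _ ≤ |γ| * (C + 1) := by
          rw [Real.norm_eq_abs]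
          apply mul_le_mul le_rfl ((hC γ hγIcc x).trans (by linarith)) (norm_nonneg _)
            (abs_nonneg _)
      _ < εp / (C + 1) * (C + 1) := by
          apply mul_lt_mul_of_pos_right hγsmall (by positivity)
      _ = εp := div_mul_cancel₀ εp (by positivity)
end
end
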